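/- Let w = u ++ v be a word split into prefix u and suffix v, and let q be a word with ed(w, q) ≤ d. Then there exists a decomposition q = p' ++ s' such that ed(u, p') + ed(v, s') ≤ d; in particular, either ed(u, p') ≤ ⌈d/2⌉ or ed(v, s') ≤ ⌈d/2⌉. -/

import Mathlib

/-- Cost structure of the former Mathlib `Levenshtein.Cost` (removed from Mathlib). -/
structure Levenshtein.Cost (α β δ : Type*) where
  delete : α → δ
  insert : β → δ
  substitute : α → β → δ

/-- The former Mathlib `Levenshtein.defaultCost`. -/
def Levenshtein.defaultCost {α : Type*} [DecidableEq α] : Levenshtein.Cost α α ℕ where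
  delete _ := 1
  insert _ := 1
  substitute a b := if a = b then 0 else 1

/-- The former Mathlib `levenshtein`, given by its characterizing recursion
(`levenshtein_nil_nil`, `levenshtein_nil_cons`, `levenshtein_cons_nil`, `levenshtein_cons_cons`). -/
def levenshtein {α β δ : Type*} [AddZeroClass δ] [Min δ] (C : Levenshtein.Cost α β δ) :
    List α → List β → δ
  | [], [] => 0
  | [], y :: ys => C.insert y + levenshtein C [] ys
  | x :: xs, [] => C.delete x + levenshtein C xs []
  | x :: xs, y :: ys =>
    min (C.delete x + levenshtein C xs (y :: ys))
      (min (C.insert y + levenshtein C (x :: xs) ys) (C.substitute x y + levenshtein C xs ys))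

@[simp] theorem Levenshtein.defaultCost_delete {α : Type*} [DecidableEq α] (a : α) :
    (Levenshtein.defaultCost : Levenshtein.Cost α α ℕ).delete a = 1 := rfl

@[simp] theorem Levenshtein.defaultCost_insert {α : Type*} [DecidableEq α] (a : α) :
    (Levenshtein.defaultCost : Levenshtein.Cost α α ℕ).insert a = 1 := rfl

@[simp] theorem Levenshtein.defaultCost_substitute {α : Type*} [DecidableEq α] (a b : α) :
    (Levenshtein.defaultCost : Levenshtein.Cost α α ℕ).substitute a b = if a = b then 0 else 1 := rfl

@[simp] theorem levenshtein_nil_nil {α β δ : Type*} [AddZeroClass δ] [Min δ]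
    (C : Levenshtein.Cost α β δ) : levenshtein C [] [] = 0 := by
  rw [levenshtein]

@[simp] theorem levenshtein_nil_cons {α β δ : Type*} [AddZeroClass δ] [Min δ]
    (C : Levenshtein.Cost α β δ) (y : β) (ys : List β) :
    levenshtein C [] (y :: ys) = C.insert y + levenshtein C [] ys := by
  rw [levenshtein]

@[simp] theorem levenshtein_cons_nil {α β δ : Type*} [AddZeroClass δ] [Min δ]
    (C : Levenshtein.Cost α β δ) (x : α) (xs : List α) :
    levenshtein C (x :: xs) [] = C.delete x + levenshtein C xs [] := by
  rw [levenshtein]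

theorem levenshtein_cons_cons {α β δ : Type*} [AddZeroClass δ] [Min δ]
    (C : Levenshtein.Cost α β δ) (x : α) (xs : List α) (y : β) (ys : List β) :
    levenshtein C (x :: xs) (y :: ys) =
      min (C.delete x + levenshtein C xs (y :: ys))
        (min (C.insert y + levenshtein C (x :: xs) ys) (C.substitute x y + levenshtein C xs ys)) := by
  rw [levenshtein]

/-- Levenshtein edit distance with unit costs. -/
def ed {α : Type*} [DecidableEq α] (u v : List α) : ℕ :=
  levenshtein Levenshtein.defaultCost u v

private lemma ed_nil_left {α : Type*} [DecidableEq α] (ys : List α) :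
    ed ([] : List α) ys = ys.length := by
  induction ys with
  | nil => simp [ed, levenshtein_nil_nil]
  | cons y ys ih => simp [ed, levenshtein_nil_cons] at *; omega

private lemma ed_nil_right {α : Type*} [DecidableEq α] (xs : List α) :
    ed xs ([] : List α) = xs.length := by
  induction xs with
  | nil => simp [ed, levenshtein_nil_nil]
  | cons x xs ih => simp [ed, levenshtein_cons_nil] at *; omega

private lemma ed_cons_left_le {α : Type*} [DecidableEq α] (x : α) (xs ys : List α) :
    ed (x :: xs) ys ≤ 1 + ed xs ys := by
  cases ys with
  | nil => rw [ed_nil_right, ed_nil_right]; simp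
  | cons y ys =>
    have := levenshtein_cons_cons (C := Levenshtein.defaultCost) x xs y ys
    simp only [ed, this]
    exact le_trans (min_le_left _ _) (by simp)

private lemma ed_cons_right_le {α : Type*} [DecidableEq α] (y : α) (xs ys : List α) :
    ed xs (y :: ys) ≤ 1 + ed xs ys := by
  cases xs with
  | nil => rw [ed_nil_left, ed_nil_left]; simp
  | cons x xs =>
    have := levenshtein_cons_cons (C := Levenshtein.defaultCost) x xs y ys
    simp only [ed, this]
    exact le_trans (le_trans (min_le_right _ _) (min_le_left _ _)) (by simp)

private lemma ed_cons_cons_le {α : Type*} [DecidableEq α] (x y : α) (xs ys : List α) :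
    ed (x :: xs) (y :: ys) ≤ (if x = y then 0 else 1) + ed xs ys := by
  have := levenshtein_cons_cons (C := Levenshtein.defaultCost) x xs y ys
  simp only [ed, this]
  exact le_trans (le_trans (min_le_right _ _) (min_le_right _ _)) (by simp)

private lemma exists_split {α : Type*} [DecidableEq α] (u v q : List α) :
    ∃ p s : List α, q = p ++ s ∧ ed u p + ed v s ≤ ed (u ++ v) q := by
  induction u generalizing q with
  | nil =>
    exact ⟨[], q, rfl, by simp [ed_nil_left, ed_nil_right]⟩
  | cons x u ihu =>
    induction q with
    | nil =>
      refine ⟨[], [], rfl, ?_⟩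
      simp only [ed_nil_right, List.length_append, List.length_cons]
      omega
    | cons y q ihq =>
      have hrec := levenshtein_cons_cons (C := Levenshtein.defaultCost) x (u ++ v) y q
      have hkey : ed (x :: u ++ v) (y :: q) =
          min (1 + ed (u ++ v) (y :: q))
            (min (1 + ed (x :: u ++ v) q)
              ((if x = y then 0 else 1) + ed (u ++ v) q)) := by
        simpa [ed] using hrec
      rcases le_or_gt (1 + ed (u ++ v) (y :: q)) (min (1 + ed (x :: u ++ v) q)
          ((if x = y then 0 else 1) + ed (u ++ v) q)) with h | h
      · -- delete case
        obtain ⟨p, s, hq, hps⟩ := ihu (y :: q)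
        refine ⟨p, s, hq, ?_⟩
        have h1 := ed_cons_left_le x u p
        have h2 : ed (x :: u ++ v) (y :: q) = 1 + ed (u ++ v) (y :: q) := by
          rw [hkey]; omega
        omega
      · have hkey' : ed (x :: u ++ v) (y :: q) =
            min (1 + ed (x :: u ++ v) q) ((if x = y then 0 else 1) + ed (u ++ v) q) := by
          rw [hkey]; omega
        rcases le_or_gt (1 + ed (x :: u ++ v) q) ((if x = y then 0 else 1) + ed (u ++ v) q)
          with h2 | h2
        · -- insert case
          obtain ⟨p, s, hq, hps⟩ := ihq
          refine ⟨y :: p, s, by rw [hq, List.cons_append], ?_⟩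
          have h1 := ed_cons_right_le y (x :: u) p
          have h3 : ed (x :: u ++ v) (y :: q) = 1 + ed (x :: u ++ v) q := by
            rw [hkey']; omega
          omega
        · -- substitute case
          obtain ⟨p, s, hq, hps⟩ := ihu q
          refine ⟨y :: p, s, by rw [hq, List.cons_append], ?_⟩
          have h1 := ed_cons_cons_le x y u p
          have h3 : ed (x :: u ++ v) (y :: q) =
              (if x = y then 0 else 1) + ed (u ++ v) q := by
            rw [hkey']; omega
          rcases eq_or_ne x y with hxy | hxy
          · rw [if_pos hxy] at h1 h3; omega
          · rw [if_neg hxy] at h1 h3; omega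

/-- If `ed (u ++ v) q ≤ d`, then `q` splits as `p' ++ s'` with
`ed u p' + ed v s' ≤ d`; in particular either `ed u p' ≤ ⌈d/2⌉` or `ed v s' ≤ ⌈d/2⌉`. -/
theorem exists_split_of_ed_concat_le {α : Type*} [DecidableEq α]
    (u v q : List α) (d : ℕ) (hd : ed (u ++ v) q ≤ d) :
    ∃ p' s' : List α, q = p' ++ s' ∧ ed u p' + ed v s' ≤ d ∧
      (ed u p' ≤ (d + 1) / 2 ∨ ed v s' ≤ (d + 1) / 2) := by
  obtain ⟨p, s, rfl, hps⟩ := exists_split u v q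
  exact ⟨p, s, rfl, by omega, by omega⟩
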